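/- Let f, h : ℝ → ℝ be increasing homeomorphisms such that f − id, f⁻¹ − id, h − id, h⁻¹ − id are bounded and Lipschitz, and set w = h ∘ f⁻¹. Let y_A, y_B : ℝ → ℝ be such that y_A − id and y_B − id are bounded and Lipschitz. Then ‖(y_A∘f)' − (y_B∘h)'‖_{L²(ℝ)}² ≤ ‖f'‖_{L∞}·‖y_A' − (y_B∘w)'‖_{L²(ℝ)}², where the derivatives are taken almost everywhere. -/

import Mathlib

open MeasureTheory
open scoped ENNReal NNReal

noncomputable section

/-- The real-valued `L^p` norm of a function `ℝ → ℝ` (Lebesgue measure). -/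
def nrm (p : ℝ≥0∞) (f : ℝ → ℝ) : ℝ := (eLpNorm f p volume).toReal

/-- `f` is bounded and Lipschitz. -/
def bddLip (f : ℝ → ℝ) : Prop := (∃ C, ∀ x, |f x| ≤ C) ∧ (∃ K, LipschitzWith K f)

lemma lip_of_sub_id {f : ℝ → ℝ} (h : ∃ K, LipschitzWith K fun x => f x - x) :
    ∃ K : ℝ≥0, LipschitzWith K f := by
  obtain ⟨K, hK⟩ := h
  refine ⟨K + 1, ?_⟩
  have hf : f = (fun x => f x - x) + fun x => x := by funext x; simp
  rw [hf]
  exact hK.add LipschitzWith.id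

lemma lip_image_null {K : ℝ≥0} {g : ℝ → ℝ} (hg : LipschitzWith K g)
    {s : Set ℝ} (hs : volume s = 0) : volume (g '' s) = 0 := by
  have h := hg.hausdorffMeasure_image_le zero_le_one s
  simp only [MeasureTheory.hausdorffMeasure_real] at h
  refine le_antisymm (h.trans ?_) zero_le
  rw [hs, mul_zero]

lemma ae_deriv_comp {f u : ℝ → ℝ} {Kf Ku Ki : ℝ≥0}
    (hfl : LipschitzWith Kf f) (hil : LipschitzWith Ki (Function.invFun f))
    (hfbij : Function.Bijective f) (hul : LipschitzWith Ku u) :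
    ∀ᵐ ξ, deriv (fun x => u (f x)) ξ = deriv u (f ξ) * deriv f ξ := by
  have h1 : ∀ᵐ ξ, DifferentiableAt ℝ f ξ := hfl.ae_differentiableAt
  have h2 : ∀ᵐ ξ, DifferentiableAt ℝ u (f ξ) := by
    have hu : ∀ᵐ x, DifferentiableAt ℝ u x := hul.ae_differentiableAt
    rw [ae_iff] at hu ⊢
    have hset : {ξ | ¬DifferentiableAt ℝ u (f ξ)}
        = Function.invFun f '' {x | ¬DifferentiableAt ℝ u x} := by
      ext ξ
      simp only [Set.mem_setOf_eq, Set.mem_image]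
      constructor
      · intro hx
        exact ⟨f ξ, hx, Function.leftInverse_invFun hfbij.1 ξ⟩
      · rintro ⟨x, hx, rfl⟩
        rwa [Function.rightInverse_invFun hfbij.2 x]
    rw [hset]
    exact lip_image_null hil hu
  filter_upwards [h1, h2] with ξ hfd hud
  exact (hud.hasDerivAt.comp ξ hfd.hasDerivAt).deriv

lemma lintegral_cov {f : ℝ → ℝ} {Kf : ℝ≥0}
    (hfl : LipschitzWith Kf f)
    (hfmono : StrictMono f) (hfsurj : Function.Surjective f)
    (G : ℝ → ℝ≥0∞) :
    ∫⁻ η, G η = ∫⁻ ξ, (‖deriv f ξ‖₊ : ℝ≥0∞) * G (f ξ) := by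
  set s := {x | DifferentiableAt ℝ f x} with hs_def
  have hs : MeasurableSet s := measurableSet_of_differentiableAt ℝ f
  have hsc : volume sᶜ = 0 := by
    have h := hfl.ae_differentiableAt (μ := volume)
    rw [ae_iff] at h
    exact h
  have himg : volume (f '' s)ᶜ = 0 := by
    have hsub : (f '' s)ᶜ ⊆ f '' sᶜ := by
      intro y hy
      obtain ⟨x, rfl⟩ := hfsurj y
      exact ⟨x, fun hx => hy (Set.mem_image_of_mem f hx), rfl⟩
    exact measure_mono_null hsub (lip_image_null hfl hsc)
  have key := lintegral_image_eq_lintegral_abs_det_fderiv_mul volume hs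
      (f' := fun x => (1 : ℝ →L[ℝ] ℝ).smulRight (deriv f x))
      (fun x hx => hx.hasDerivAt.hasDerivWithinAt.hasFDerivWithinAt)
      (hfmono.injective.injOn) G
  simp only [ContinuousLinearMap.det_smulRight, ContinuousLinearMap.one_apply, one_mul] at key
  calc ∫⁻ η, G η = ∫⁻ η in Set.univ, G η := (setLIntegral_univ G).symm
    _ = ∫⁻ η in f '' s, G η :=
          (setLIntegral_congr (MeasureTheory.ae_eq_univ.2 himg)).symm
    _ = ∫⁻ x in s, ENNReal.ofReal |deriv f x| * G (f x) := key
    _ = ∫⁻ x in Set.univ, ENNReal.ofReal |deriv f x| * G (f x) :=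
          setLIntegral_congr (MeasureTheory.ae_eq_univ.2 hsc)
    _ = ∫⁻ x, (‖deriv f x‖₊ : ℝ≥0∞) * G (f x) := by
          rw [setLIntegral_univ]
          congr 1
          funext x
          rw [← enorm_eq_nnnorm, Real.enorm_eq_ofReal_abs]

lemma nrm_two_sq (g : ℝ → ℝ) :
    nrm 2 g ^ 2 = (∫⁻ x, (‖g x‖₊ : ℝ≥0∞) ^ (2 : ℝ)).toReal := by
  rw [nrm, eLpNorm_eq_lintegral_rpow_enorm_toReal two_ne_zero ENNReal.ofNat_ne_top]
  rw [ENNReal.toReal_ofNat, ← ENNReal.toReal_rpow,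
    ← Real.rpow_natCast (_ ^ (1 / (2:ℝ))) 2, ← Real.rpow_mul ENNReal.toReal_nonneg]
  norm_num
  rfl

theorem statement9 (f h : ℝ → ℝ)
    (hfmono : StrictMono f) (hfbij : Function.Bijective f)
    (hhmono : StrictMono h) (hhbij : Function.Bijective h)
    (hf : bddLip fun x => f x - x) (hfi : bddLip fun x => Function.invFun f x - x)
    (hh : bddLip fun x => h x - x) (hhi : bddLip fun x => Function.invFun h x - x)
    (yA yB : ℝ → ℝ)
    (hyA : bddLip fun x => yA x - x) (hyB : bddLip fun x => yB x - x) :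
    nrm 2 (fun ξ => deriv (fun x => yA (f x)) ξ - deriv (fun x => yB (h x)) ξ) ^ 2 ≤
      nrm ⊤ (deriv f) *
        nrm 2 (fun ξ => deriv yA ξ
          - deriv (fun x => yB (h (Function.invFun f x))) ξ) ^ 2 := by
  obtain ⟨Kf, hfl⟩ := lip_of_sub_id hf.2
  obtain ⟨Ki, hil⟩ := lip_of_sub_id hfi.2
  obtain ⟨Kh, hhl⟩ := lip_of_sub_id hh.2
  obtain ⟨KA, hyAl⟩ := lip_of_sub_id hyA.2
  obtain ⟨KB, hyBl⟩ := lip_of_sub_id hyB.2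
  set g : ℝ → ℝ := fun x => yB (h (Function.invFun f x)) with hg_def
  have hgl : LipschitzWith (KB * (Kh * Ki)) g := hyBl.comp (hhl.comp hil)
  set DL : ℝ → ℝ :=
    fun ξ => deriv (fun x => yA (f x)) ξ - deriv (fun x => yB (h x)) ξ with hDL_def
  set DR : ℝ → ℝ := fun ξ => deriv yA ξ - deriv g ξ with hDR_def
  have hAc := ae_deriv_comp hfl hil hfbij hyAl
  have hGc := ae_deriv_comp hfl hil hfbij hgl
  have hgf : (fun x => yB (h x)) = fun x => g (f x) := by
    funext x
    simp only [hg_def]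
    rw [Function.leftInverse_invFun hfbij.1 x]
  have hDLae : ∀ᵐ ξ, DL ξ = DR (f ξ) * deriv f ξ := by
    filter_upwards [hAc, hGc] with ξ h1 h2
    simp only [hDL_def, hDR_def, hgf, h1, h2]
    ring
  have hinv := ae_deriv_comp hfl hil hfbij hil
  have hid : (fun x => Function.invFun f (f x)) = fun x => x := by
    funext x; exact Function.leftInverse_invFun hfbij.1 x
  have hinv1 : ∀ᵐ ξ, deriv (Function.invFun f) (f ξ) * deriv f ξ = 1 := by
    filter_upwards [hinv] with ξ h1
    rw [← h1, hid]
    simp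
  set c : ℝ≥0∞ := eLpNorm (deriv f) ⊤ volume with hc_def
  have hc_top : c ≠ ⊤ := by
    rw [hc_def, eLpNorm_exponent_top]
    exact (eLpNormEssSup_lt_top_of_ae_bound (C := (Kf : ℝ))
      (Filter.Eventually.of_forall fun x => norm_deriv_le_of_lipschitz hfl)).ne
  have hc_ae : ∀ᵐ ξ, (‖deriv f ξ‖₊ : ℝ≥0∞) ≤ c := by
    rw [hc_def, eLpNorm_exponent_top]
    exact ae_le_eLpNormEssSup
  set A := ∫⁻ ξ, (‖DL ξ‖₊ : ℝ≥0∞) ^ (2:ℝ) with hA_def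
  set B := ∫⁻ η, (‖DR η‖₊ : ℝ≥0∞) ^ (2:ℝ) with hB_def
  have hsq : ∀ x : ℝ≥0∞, x ^ (2:ℝ) = x * x := fun x => by
    rw [show (2:ℝ) = ((2:ℕ):ℝ) by norm_num, ENNReal.rpow_natCast]; ring
  have hDLsq : ∀ᵐ ξ, (‖DL ξ‖₊ : ℝ≥0∞) ^ (2:ℝ)
      = ((‖DR (f ξ)‖₊ : ℝ≥0∞) ^ (2:ℝ) * ‖deriv f ξ‖₊) * ‖deriv f ξ‖₊ := by
    filter_upwards [hDLae] with ξ h1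
    rw [h1, nnnorm_mul, ENNReal.coe_mul, hsq, hsq]
    ring
  have hcov : (∫⁻ ξ, (‖deriv f ξ‖₊ : ℝ≥0∞) * (‖DR (f ξ)‖₊ : ℝ≥0∞) ^ (2:ℝ)) = B := by
    rw [hB_def, lintegral_cov hfl hfmono hfbij.2 (fun η => (‖DR η‖₊ : ℝ≥0∞) ^ (2:ℝ))]
  have hAB : A ≤ c * B := by
    have step1 : A ≤ c * ∫⁻ ξ, (‖deriv f ξ‖₊ : ℝ≥0∞) * (‖DR (f ξ)‖₊ : ℝ≥0∞) ^ (2:ℝ) := by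
      rw [← lintegral_const_mul' c _ hc_top]
      refine lintegral_mono_ae ?_
      filter_upwards [hDLsq, hc_ae] with ξ h1 h2
      rw [h1]
      calc ((‖DR (f ξ)‖₊ : ℝ≥0∞) ^ (2:ℝ) * ‖deriv f ξ‖₊) * ‖deriv f ξ‖₊
          ≤ ((‖DR (f ξ)‖₊ : ℝ≥0∞) ^ (2:ℝ) * ‖deriv f ξ‖₊) * c := mul_le_mul_right h2 _
        _ = c * ((‖deriv f ξ‖₊ : ℝ≥0∞) * (‖DR (f ξ)‖₊ : ℝ≥0∞) ^ (2:ℝ)) := by ring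
    calc A ≤ c * ∫⁻ ξ, (‖deriv f ξ‖₊ : ℝ≥0∞) * (‖DR (f ξ)‖₊ : ℝ≥0∞) ^ (2:ℝ) := step1
      _ = c * B := by rw [hcov]
  have hBA : B ≤ (Ki : ℝ≥0∞) * A := by
    rw [← hcov, hA_def, ← lintegral_const_mul' _ _ ENNReal.coe_ne_top]
    refine lintegral_mono_ae ?_
    filter_upwards [hDLsq, hinv1] with ξ h1 h2
    have h3 : (‖deriv (Function.invFun f) (f ξ)‖₊ : ℝ≥0∞) * ‖deriv f ξ‖₊ = 1 := by
      rw [← ENNReal.coe_mul, ← nnnorm_mul, h2, nnnorm_one, ENNReal.coe_one]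
    have h4 : (‖deriv (Function.invFun f) (f ξ)‖₊ : ℝ≥0∞) ≤ (Ki : ℝ≥0∞) := by
      exact_mod_cast norm_deriv_le_of_lipschitz hil
    calc (‖deriv f ξ‖₊ : ℝ≥0∞) * (‖DR (f ξ)‖₊ : ℝ≥0∞) ^ (2:ℝ)
        = (‖DL ξ‖₊ : ℝ≥0∞) ^ (2:ℝ) * (‖deriv (Function.invFun f) (f ξ)‖₊ : ℝ≥0∞) := by
          rw [h1, ← one_mul ((‖deriv f ξ‖₊ : ℝ≥0∞) * (‖DR (f ξ)‖₊ : ℝ≥0∞) ^ (2:ℝ)), ← h3]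
          ring
      _ ≤ (‖DL ξ‖₊ : ℝ≥0∞) ^ (2:ℝ) * (Ki : ℝ≥0∞) := mul_le_mul_right h4 _
      _ = (Ki : ℝ≥0∞) * (‖DL ξ‖₊ : ℝ≥0∞) ^ (2:ℝ) := mul_comm _ _
  have hL : nrm 2 DL ^ 2 = A.toReal := nrm_two_sq DL
  have hR : nrm 2 DR ^ 2 = B.toReal := nrm_two_sq DR
  have hcr : nrm ⊤ (deriv f) = c.toReal := by rw [nrm, hc_def]
  rcases eq_or_ne B ⊤ with hB | hB
  · have hA_top : A = ⊤ := by
      by_contra hA_ne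
      exact (lt_of_le_of_lt hBA
        (ENNReal.mul_lt_top ENNReal.coe_lt_top (lt_top_iff_ne_top.2 hA_ne))).ne hB
    rw [hL, hA_top]
    simp only [ENNReal.toReal_top]
    have h1 : 0 ≤ nrm ⊤ (deriv f) := ENNReal.toReal_nonneg
    have h2 : 0 ≤ nrm 2 DR ^ 2 := sq_nonneg _
    positivity
  · rw [hL, hR, hcr, ← ENNReal.toReal_mul]
    exact ENNReal.toReal_mono (ENNReal.mul_ne_top hc_top hB) hAB

end
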